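/- arXiv:1808.00389 — 5 statements merged into one kernel-verified Lean document; each statement's English description precedes it below -/
import Mathlib

section
/- Let G be a graph, let F ⊆ G be a path-forest, and let J ⊆ V(F) be the set of vertices of F having degree at most one in F. Let x ∈ V(G) \ V(F) be a vertex with at least 3 neighbours (in G) inside J. Then there exist vertices j₁, j₂ ∈ V(F) such that the graph obtained from F by adding the two edges x j₁ and x j₂ is again a path-forest. -/
open SimpleGraph

/-- A path-forest: a subgraph (with vertex set `F.verts`, possibly containing isolated
vertices) which contains no cycle and has maximum degree at most `2`. -/
def IsPathForest {V : Type*} {G : SimpleGraph V} (F : G.Subgraph) : Prop :=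
  F.spanningCoe.IsAcyclic ∧ ∀ v, (F.neighborSet v).encard ≤ 2

private lemma three_le_encard {α : Type*} {s : Set α} {a b c : α} (ha : a ∈ s) (hb : b ∈ s)
    (hc : c ∈ s) (hab : a ≠ b) (hac : a ≠ c) (hbc : b ≠ c) : 3 ≤ s.encard := by
  have h1 : ({a, b, c} : Set α).encard = 3 := by
    rw [Set.encard_insert_of_notMem (by simp [hab, hac]), Set.encard_pair hbc]
    rfl
  rw [← h1]
  exact Set.encard_le_encard (by simp [Set.insert_subset_iff, ha, hb, hc])

private lemma two_le_encard {α : Type*} {s : Set α} {a b : α} (ha : a ∈ s) (hb : b ∈ s)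
    (hab : a ≠ b) : 2 ≤ s.encard := by
  rw [← Set.encard_pair hab]
  exact Set.encard_le_encard (by simp [Set.insert_subset_iff, ha, hb])

private lemma diverge_aux {V : Type*} {H : SimpleGraph V}
    (hdeg2 : ∀ v, (H.neighborSet v).encard ≤ 2) :
    ∀ (n : ℕ) (m y₂ y₃ prev : V) (p : H.Walk m y₂) (r : H.Walk m y₃),
      p.length + r.length ≤ n →
      H.Adj prev m → p.IsPath → r.IsPath →
      prev ∉ p.support → prev ∉ r.support →
      y₂ ≠ y₃ → (H.neighborSet y₂).encard ≤ 1 → (H.neighborSet y₃).encard ≤ 1 → False := by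
  intro n
  induction n with
  | zero =>
    intro m y₂ y₃ prev p r hlen _ _ _ _ _ hne _ _
    cases p with
    | nil =>
      cases r with
      | nil => exact hne rfl
      | cons h r' => simp [SimpleGraph.Walk.length_cons] at hlen
    | cons h p' => simp [SimpleGraph.Walk.length_cons] at hlen
  | succ n ih =>
    intro m y₂ y₃ prev p r hlen hadj hp hr hpp hpr hne h2 h3
    cases p with
    | nil =>
      cases r with
      | nil => exact hne rfl
      | @cons _ v _ hmv r' =>
        have hv : v ∈ H.neighborSet m := hmv
        have hprev : prev ∈ H.neighborSet m := hadj.symm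
        have hvp : v ≠ prev := by
          intro hvp
          apply hpr
          simp only [SimpleGraph.Walk.support_cons, List.mem_cons]
          exact Or.inr (hvp ▸ r'.start_mem_support)
        have := le_trans (two_le_encard hv hprev hvp) h2
        norm_num at this
    | @cons _ a _ hma p' =>
      cases r with
      | nil =>
        have ha : a ∈ H.neighborSet m := hma
        have hprev : prev ∈ H.neighborSet m := hadj.symm
        have hap : a ≠ prev := by
          intro hap
          apply hpp
          simp only [SimpleGraph.Walk.support_cons, List.mem_cons]
          exact Or.inr (hap ▸ p'.start_mem_support)
        have := le_trans (two_le_encard ha hprev hap) h3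
        norm_num at this
      | @cons _ b _ hmb r' =>
        have ha : a ∈ H.neighborSet m := hma
        have hb : b ∈ H.neighborSet m := hmb
        have hprev : prev ∈ H.neighborSet m := hadj.symm
        have hpa : prev ≠ a := by
          intro hpa; apply hpp
          simp only [SimpleGraph.Walk.support_cons, List.mem_cons]
          exact Or.inr (hpa ▸ p'.start_mem_support)
        have hpb : prev ≠ b := by
          intro hpb; apply hpr
          simp only [SimpleGraph.Walk.support_cons, List.mem_cons]
          exact Or.inr (hpb ▸ r'.start_mem_support)
        have hab : a = b := by
          by_contra hab
          have := le_trans (three_le_encard hprev ha hb hpa hpb hab) (hdeg2 m)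
          norm_num at this
        subst hab
        have hp' : p'.IsPath := hp.of_cons
        have hr' : r'.IsPath := hr.of_cons
        have hmp' : m ∉ p'.support := by
          have := hp.support_nodup
          rw [SimpleGraph.Walk.support_cons] at this
          exact (List.nodup_cons.mp this).1
        have hmr' : m ∉ r'.support := by
          have := hr.support_nodup
          rw [SimpleGraph.Walk.support_cons] at this
          exact (List.nodup_cons.mp this).1
        exact ih a y₂ y₃ m p' r'
          (by simp only [SimpleGraph.Walk.length_cons] at hlen; omega)
          hma hp' hr' hmp' hmr' hne h2 h3

private lemma no_three_leaves {V : Type*} {H : SimpleGraph V}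
    (hdeg2 : ∀ v, (H.neighborSet v).encard ≤ 2) {y₁ y₂ y₃ : V}
    (h12 : y₁ ≠ y₂) (h13 : y₁ ≠ y₃) (h23 : y₂ ≠ y₃)
    (d1 : (H.neighborSet y₁).encard ≤ 1) (d2 : (H.neighborSet y₂).encard ≤ 1)
    (d3 : (H.neighborSet y₃).encard ≤ 1)
    (R12 : H.Reachable y₁ y₂) (R13 : H.Reachable y₁ y₃) : False := by
  classical
  obtain ⟨p0⟩ := R12
  obtain ⟨r0⟩ := R13
  obtain ⟨p, hp⟩ := p0.toPath
  obtain ⟨r, hr⟩ := r0.toPath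
  cases p with
  | nil => exact h12 rfl
  | @cons _ a _ hy1a p' =>
    cases r with
    | nil => exact h13 rfl
    | @cons _ b _ hy1b r' =>
      have ha : a ∈ H.neighborSet y₁ := hy1a
      have hb : b ∈ H.neighborSet y₁ := hy1b
      have hab : a = b := by
        by_contra hab
        have := le_trans (two_le_encard ha hb hab) d1
        norm_num at this
      subst hab
      have hp' : p'.IsPath := hp.of_cons
      have hr' : r'.IsPath := hr.of_cons
      have h1p' : y₁ ∉ p'.support := by
        have := hp.support_nodup
        rw [SimpleGraph.Walk.support_cons] at this
        exact (List.nodup_cons.mp this).1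
      have h1r' : y₁ ∉ r'.support := by
        have := hr.support_nodup
        rw [SimpleGraph.Walk.support_cons] at this
        exact (List.nodup_cons.mp this).1
      exact diverge_aux hdeg2 (p'.length + r'.length) a y₂ y₃ y₁ p' r' le_rfl
        hy1a hp' hr' h1p' h1r' h23 d2 d3

private lemma extend_pf {V : Type*} {G : SimpleGraph V} (F F' : G.Subgraph) (x j₁ j₂ : V)
    (hAdj : ∀ a b, F'.Adj a b ↔ (F.Adj a b ∨ s(a, b) = s(x, j₁) ∨ s(a, b) = s(x, j₂)))
    (hne : j₁ ≠ j₂) (hxj₁ : x ≠ j₁) (hxj₂ : x ≠ j₂)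
    (hFAdjx : ∀ w, ¬ F.Adj x w)
    (dj₁ : (F.neighborSet j₁).encard ≤ 1) (dj₂ : (F.neighborSet j₂).encard ≤ 1)
    (hdegF : ∀ v, (F.neighborSet v).encard ≤ 2)
    (hacyc : F.spanningCoe.IsAcyclic)
    (hreach : ¬ F.spanningCoe.Reachable j₁ j₂) : IsPathForest F' := by
  classical
  have hAdjX : ∀ w, F'.Adj x w → (w = j₁ ∨ w = j₂) := by
    intro w h
    rcases (hAdj x w).mp h with h | h | h
    · exact absurd h (hFAdjx w)
    · rcases Sym2.eq_iff.mp h with ⟨-, rfl⟩ | ⟨h1, -⟩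
      · exact Or.inl rfl
      · exact absurd h1 hxj₁
    · rcases Sym2.eq_iff.mp h with ⟨-, rfl⟩ | ⟨h1, -⟩
      · exact Or.inr rfl
      · exact absurd h1 hxj₂
  have hAdjX' : ∀ w, F'.spanningCoe.Adj x w → (w = j₁ ∨ w = j₂) := by
    intro w h
    exact hAdjX w ((Subgraph.spanningCoe_adj F' x w) ▸ h)
  have hAdjNotX : ∀ a b, F'.Adj a b → a ≠ x → b ≠ x → F.Adj a b := by
    intro a b h hax hbx
    rcases (hAdj a b).mp h with h | h | h
    · exact h
    · rcases Sym2.eq_iff.mp h with ⟨h1, -⟩ | ⟨-, h2⟩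
      · exact absurd h1 hax
      · exact absurd h2 hbx
    · rcases Sym2.eq_iff.mp h with ⟨h1, -⟩ | ⟨-, h2⟩
      · exact absurd h1 hax
      · exact absurd h2 hbx
  -- transfer helper
  have htrans : ∀ {u w : V} (p : F'.spanningCoe.Walk u w), x ∉ p.support →
      ∀ e ∈ p.edges, e ∈ F.spanningCoe.edgeSet := by
    intro u w p hxp
    intro e
    refine Sym2.ind (fun a b he => ?_) e
    have hab : F'.spanningCoe.Adj a b := p.edges_subset_edgeSet he
    have hab' : F'.Adj a b := (Subgraph.spanningCoe_adj F' a b) ▸ hab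
    have hax : a ≠ x := fun h => hxp (h ▸ Walk.fst_mem_support_of_mem_edges p he)
    have hbx : b ≠ x := fun h => hxp (h ▸ Walk.snd_mem_support_of_mem_edges p he)
    exact (SimpleGraph.mem_edgeSet _).mpr
      ((Subgraph.spanningCoe_adj F a b).symm ▸ hAdjNotX a b hab' hax hbx)
  constructor
  · -- acyclic
    intro v c hc
    by_cases hxm : x ∈ c.support
    · have hc2 := hc.rotate hxm
      generalize hqeq : c.rotate x hxm = q at hc2
      cases q with
      | nil => exact Walk.IsCycle.not_of_nil hc2
      | @cons _ b _ hxb q' =>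
        rw [Walk.cons_isCycle_iff] at hc2
        obtain ⟨hq'path, hxbedge⟩ := hc2
        have hbj : b = j₁ ∨ b = j₂ := hAdjX' b hxb
        have hxbne : x ≠ b := hxb.ne
        obtain ⟨cc, hxc, rq', hrq⟩ := Walk.exists_eq_cons_of_ne hxbne q'.reverse
        have hrev : q'.reverse.IsPath := hq'path.reverse
        rw [hrq, Walk.cons_isPath_iff] at hrev
        obtain ⟨hrq'path, hxrq'⟩ := hrev
        have hccj : cc = j₁ ∨ cc = j₂ := hAdjX' cc hxc
        have hedgemem : s(x, cc) ∈ q'.edges := by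
          have h1 : s(x, cc) ∈ q'.reverse.edges := by
            rw [hrq, Walk.edges_cons]; exact List.mem_cons_self
          rwa [Walk.edges_reverse, List.mem_reverse] at h1
        have hccb : cc ≠ b := by rintro rfl; exact hxbedge hedgemem
        have hreachcb : F.spanningCoe.Reachable cc b :=
          ⟨rq'.transfer _ (htrans rq' hxrq')⟩
        rcases hccj with rfl | rfl <;> rcases hbj with rfl | rfl
        · exact hccb rfl
        · exact hreach hreachcb
        · exact hreach hreachcb.symm
        · exact hccb rfl
    · exact hacyc _ (hc.transfer (htrans c hxm))
  · -- degrees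
    intro v
    by_cases hvx : v = x
    · subst hvx
      have : F'.neighborSet v = {j₁, j₂} := by
        ext w
        simp only [Subgraph.mem_neighborSet, Set.mem_insert_iff, Set.mem_singleton_iff]
        constructor
        · exact hAdjX w
        · rintro (rfl | rfl)
          · exact (hAdj v w).mpr (Or.inr (Or.inl rfl))
          · exact (hAdj v w).mpr (Or.inr (Or.inr rfl))
      rw [this, Set.encard_pair hne]
    · have hsub : F'.neighborSet v ⊆ insert x (F.neighborSet v) := by
        intro w hw
        rw [Subgraph.mem_neighborSet] at hw
        rcases (hAdj v w).mp hw with h | h | h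
        · exact Set.mem_insert_of_mem _ h
        · rcases Sym2.eq_iff.mp h with ⟨h1, -⟩ | ⟨-, rfl⟩
          · exact absurd h1 hvx
          · exact Set.mem_insert _ _
        · rcases Sym2.eq_iff.mp h with ⟨h1, -⟩ | ⟨-, rfl⟩
          · exact absurd h1 hvx
          · exact Set.mem_insert _ _
      by_cases hv1 : v = j₁
      · subst hv1
        calc (F'.neighborSet v).encard ≤ (insert x (F.neighborSet v)).encard :=
              Set.encard_le_encard hsub
          _ ≤ (F.neighborSet v).encard + 1 := Set.encard_insert_le _ _
          _ ≤ 1 + 1 := add_le_add_left dj₁ 1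
          _ = 2 := one_add_one_eq_two
      · by_cases hv2 : v = j₂
        · subst hv2
          calc (F'.neighborSet v).encard ≤ (insert x (F.neighborSet v)).encard :=
                Set.encard_le_encard hsub
            _ ≤ (F.neighborSet v).encard + 1 := Set.encard_insert_le _ _
            _ ≤ 1 + 1 := add_le_add_left dj₂ 1
            _ = 2 := one_add_one_eq_two
        · -- v not x, j₁, j₂ : neighborSet unchanged
          have heq : F'.neighborSet v = F.neighborSet v := by
            ext w
            simp only [Subgraph.mem_neighborSet]
            constructor
            · intro h
              rcases (hAdj v w).mp h with h | h | h
              · exact h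
              · rcases Sym2.eq_iff.mp h with ⟨h1, -⟩ | ⟨h1, -⟩
                · exact absurd h1 hvx
                · exact absurd h1 hv1
              · rcases Sym2.eq_iff.mp h with ⟨h1, -⟩ | ⟨h1, -⟩
                · exact absurd h1 hvx
                · exact absurd h1 hv2
            · intro h; exact (hAdj v w).mpr (Or.inl h)
          rw [heq]; exact hdegF v

/-- Let `F ⊆ G` be a path-forest, `J ⊆ V(F)` the set of vertices of degree at most one
in `F`, and let `x ∈ V(G) \ V(F)` have at least `3` neighbours (in `G`) inside `J`.
Then there are `j₁, j₂ ∈ V(F)` such that adding the two edges `x j₁` and `x j₂` to `F`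
yields again a path-forest. -/
theorem pathForest_extend_forward {V : Type*} {G : SimpleGraph V} (F : G.Subgraph)
    (hF : IsPathForest F) (x : V) (hx : x ∉ F.verts)
    (hdeg : 3 ≤ (G.neighborSet x ∩
      {v | v ∈ F.verts ∧ (F.neighborSet v).encard ≤ 1}).encard) :
    ∃ j₁ j₂ : V, j₁ ∈ F.verts ∧ j₂ ∈ F.verts ∧ j₁ ≠ j₂ ∧
      ∃ F' : G.Subgraph,
        F'.verts = insert x F.verts ∧
        (∀ a b, F'.Adj a b ↔ (F.Adj a b ∨ s(a, b) = s(x, j₁) ∨ s(a, b) = s(x, j₂))) ∧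
        IsPathForest F' := by
  classical
  open SimpleGraph in
  set S := (G.neighborSet x ∩ {v | v ∈ F.verts ∧ (F.neighborSet v).encard ≤ 1}) with hS
  have hS1 : S.Nonempty := by
    rw [← Set.encard_ne_zero]; intro h; rw [h] at hdeg; exact absurd hdeg (by norm_num)
  obtain ⟨y₁, hy₁⟩ := hS1
  have hS2 : 1 < (S \ {y₁}).encard := by
    have hd := Set.encard_diff_singleton_add_one hy₁
    by_contra hle
    push_neg at hle
    have : S.encard ≤ 2 := by
      rw [← hd]
      calc (S \ {y₁}).encard + 1 ≤ 1 + 1 := add_le_add_left hle 1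
        _ = 2 := one_add_one_eq_two
    exact absurd (le_trans hdeg this) (by norm_num)
  obtain ⟨y₂, y₃, hy₂, hy₃, h23⟩ := Set.one_lt_encard_iff.mp hS2
  have h12 : y₁ ≠ y₂ := fun h => hy₂.2 (by simp [h])
  have h13 : y₁ ≠ y₃ := fun h => hy₃.2 (by simp [h])
  have hy₂S : y₂ ∈ S := hy₂.1
  have hy₃S : y₃ ∈ S := hy₃.1
  have hnbr : ∀ v, F.spanningCoe.neighborSet v = F.neighborSet v := by
    intro v; ext w
    simp [SimpleGraph.mem_neighborSet, SimpleGraph.Subgraph.spanningCoe_adj,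
      SimpleGraph.Subgraph.mem_neighborSet]
  have hdeg2' : ∀ v, (F.spanningCoe.neighborSet v).encard ≤ 2 := by
    intro v; rw [hnbr]; exact hF.2 v
  have dS : ∀ v ∈ S, (F.spanningCoe.neighborSet v).encard ≤ 1 := by
    intro v hv; rw [hnbr]; exact hv.2.2
  have key : ∃ j₁ j₂, j₁ ∈ S ∧ j₂ ∈ S ∧ j₁ ≠ j₂ ∧ ¬ F.spanningCoe.Reachable j₁ j₂ := by
    by_cases R12 : F.spanningCoe.Reachable y₁ y₂
    · by_cases R13 : F.spanningCoe.Reachable y₁ y₃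
      · exact absurd (no_three_leaves hdeg2' h12 h13 h23 (dS y₁ hy₁) (dS y₂ hy₂S)
          (dS y₃ hy₃S) R12 R13) not_false
      · exact ⟨y₁, y₃, hy₁, hy₃S, h13, R13⟩
    · exact ⟨y₁, y₂, hy₁, hy₂S, h12, R12⟩
  obtain ⟨j₁, j₂, hj₁, hj₂, hne, hreach⟩ := key
  have hG1 : G.Adj x j₁ := hj₁.1
  have hG2 : G.Adj x j₂ := hj₂.1
  have hj₁F : j₁ ∈ F.verts := hj₁.2.1
  have hj₂F : j₂ ∈ F.verts := hj₂.2.1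
  have dj₁ : (F.neighborSet j₁).encard ≤ 1 := hj₁.2.2
  have dj₂ : (F.neighborSet j₂).encard ≤ 1 := hj₂.2.2
  have hxj₁ : x ≠ j₁ := fun h => hx (h ▸ hj₁F)
  have hxj₂ : x ≠ j₂ := fun h => hx (h ▸ hj₂F)
  have hFAdjx : ∀ w, ¬ F.Adj x w := fun w h => hx (F.edge_vert h)
  refine ⟨j₁, j₂, hj₁F, hj₂F, hne, ?_⟩
  refine ⟨{ verts := insert x F.verts,
            Adj := fun a b => F.Adj a b ∨ s(a, b) = s(x, j₁) ∨ s(a, b) = s(x, j₂),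
            adj_sub := ?_, edge_vert := ?_, symm := ?_ }, rfl, fun a b => Iff.rfl, ?_⟩
  · rintro a b (h | h | h)
    · exact F.adj_sub h
    · rcases Sym2.eq_iff.mp h with ⟨rfl, rfl⟩ | ⟨rfl, rfl⟩
      · exact hG1
      · exact hG1.symm
    · rcases Sym2.eq_iff.mp h with ⟨rfl, rfl⟩ | ⟨rfl, rfl⟩
      · exact hG2
      · exact hG2.symm
  · rintro a b (h | h | h)
    · exact Set.mem_insert_of_mem _ (F.edge_vert h)
    · rcases Sym2.eq_iff.mp h with ⟨rfl, rfl⟩ | ⟨rfl, rfl⟩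
      · exact Set.mem_insert _ _
      · exact Set.mem_insert_of_mem _ hj₁F
    · rcases Sym2.eq_iff.mp h with ⟨rfl, rfl⟩ | ⟨rfl, rfl⟩
      · exact Set.mem_insert _ _
      · exact Set.mem_insert_of_mem _ hj₂F
  · refine ⟨?_⟩
    rintro a b (h | h | h)
    · exact Or.inl h.symm
    · exact Or.inr (Or.inl (Sym2.eq_swap.trans h))
    · exact Or.inr (Or.inr (Sym2.eq_swap.trans h))
  exact extend_pf F _ x j₁ j₂ (fun a b => Iff.rfl) hne hxj₁ hxj₂ hFAdjx dj₁ dj₂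
    hF.2 hF.1 hreach
end

section
/- Let τ₁, τ₂ > 0 and c₀ ≥ 0 be real numbers, and let s₀, s₁, s₂, … be a strictly increasing sequence of non-negative integers. Suppose there exists n₀ such that for every n ≥ n₀ one has s_{n+1} ≤ τ₁·s_n − τ₂·s_{n−1} + c₀. Then τ₁² ≥ 4·τ₂. -/
/-- If `τ₁, τ₂ > 0`, `c₀ ≥ 0` and `(s_n)` is a strictly increasing sequence of
non-negative integers with `s_{n+1} ≤ τ₁ s_n − τ₂ s_{n−1} + c₀` for all large `n`,
then `τ₁² ≥ 4 τ₂`. -/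
theorem difference_inequality (τ₁ τ₂ c₀ : ℝ) (hτ₁ : 0 < τ₁) (hτ₂ : 0 < τ₂)
    (hc₀ : 0 ≤ c₀) (s : ℕ → ℕ) (hs : StrictMono s)
    (h : ∃ n₀ : ℕ, ∀ n ≥ n₀,
      (s (n + 1) : ℝ) ≤ τ₁ * s n - τ₂ * s (n - 1) + c₀) :
    4 * τ₂ ≤ τ₁ ^ 2 := by
  by_contra hcon
  push_neg at hcon
  obtain ⟨n₀, hrec⟩ := h
  set δ : ℝ := 2 * Real.sqrt τ₂ - τ₁ with hδdef
  have hsq : Real.sqrt τ₂ ^ 2 = τ₂ := Real.sq_sqrt hτ₂.le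
  have hδ : 0 < δ := by
    have h1 : τ₁ < 2 * Real.sqrt τ₂ := by nlinarith [Real.sqrt_nonneg τ₂]
    simp only [hδdef]; linarith
  -- key algebraic fact
  have key2 : ∀ a b : ℝ, (τ₁ + δ) * (a * b) ≤ b ^ 2 + τ₂ * a ^ 2 := by
    intro a b
    have hts : τ₁ + δ = 2 * Real.sqrt τ₂ := by simp only [hδdef]; ring
    rw [hts]
    nlinarith [sq_nonneg (b - Real.sqrt τ₂ * a), hsq]
  clear_value δ
  -- s n ≥ n
  have hs_ge : ∀ n : ℕ, (n : ℝ) ≤ s n := by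
    intro n; exact_mod_cast hs.le_apply
  obtain ⟨m, hm⟩ := exists_nat_ge (2 * c₀ / δ)
  set n₁ : ℕ := max (max n₀ m) 1 with hn₁
  have hn₁n₀ : n₀ ≤ n₁ := le_trans (le_max_left _ _) (le_max_left _ _)
  have hn₁m : m ≤ n₁ := le_trans (le_max_right _ _) (le_max_left _ _)
  have hn₁1 : 1 ≤ n₁ := le_max_right _ _
  have hpos : ∀ n, n₁ ≤ n → 0 < (s n : ℝ) := by
    intro n hn
    have := hs_ge n
    have : (1 : ℝ) ≤ n := by exact_mod_cast le_trans hn₁1 hn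
    have := hs_ge n
    linarith
  -- the ratio decreases by δ/2
  have step : ∀ n, n₁ ≤ n →
      (s (n + 2) : ℝ) / s (n + 1) ≤ (s (n + 1) : ℝ) / s n - δ / 2 := by
    intro n hn
    have ha : 0 < (s n : ℝ) := hpos n hn
    have hb : 0 < (s (n + 1) : ℝ) := hpos (n + 1) (le_trans hn (Nat.le_succ n))
    have hrec' : (s (n + 2) : ℝ) ≤ τ₁ * s (n + 1) - τ₂ * s n + c₀ := by
      have := hrec (n + 1) (le_trans hn₁n₀ (le_trans hn (Nat.le_succ n)))
      simpa using this
    have hcb : c₀ ≤ δ / 2 * s (n + 1) := by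
      have h1 : (m : ℝ) ≤ s (n + 1) := by
        have : (m : ℝ) ≤ (n + 1 : ℕ) := by exact_mod_cast le_trans hn₁m (le_trans hn (Nat.le_succ n))
        linarith [hs_ge (n + 1)]
      have h2 : 2 * c₀ / δ ≤ s (n + 1) := le_trans hm h1
      rw [div_le_iff₀ hδ] at h2
      nlinarith
    set a := (s n : ℝ)
    set b := (s (n + 1) : ℝ)
    set c := (s (n + 2) : ℝ)
    have hk := key2 a b
    clear_value a b c
    have cleared : c * a ≤ (b / a - δ / 2) * b * a := by
      have heq : (b / a - δ / 2) * b * a = b ^ 2 - δ / 2 * (a * b) := by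
        field_simp
      rw [heq]
      nlinarith [mul_le_mul_of_nonneg_right hrec' ha.le,
        mul_le_mul_of_nonneg_right hcb ha.le]
    have := le_of_mul_le_mul_right cleared ha
    rw [div_le_iff₀ hb]
    linarith
  -- iterate
  have decr : ∀ k : ℕ, (s (n₁ + k + 1) : ℝ) / s (n₁ + k) ≤
      (s (n₁ + 1) : ℝ) / s n₁ - k * (δ / 2) := by
    intro k
    induction k with
    | zero => simp
    | succ k ih =>
      have hst := step (n₁ + k) (Nat.le_add_right _ _)
      have : (s (n₁ + (k + 1) + 1) : ℝ) / s (n₁ + (k + 1)) ≤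
          (s (n₁ + k + 1) : ℝ) / s (n₁ + k) - δ / 2 := by
        convert hst using 3 <;> ring
      push_cast
      push_cast at ih
      linarith
  -- ratio always > 1
  have ratio_gt : ∀ k : ℕ, (1 : ℝ) < (s (n₁ + k + 1) : ℝ) / s (n₁ + k) := by
    intro k
    have ha : 0 < (s (n₁ + k) : ℝ) := hpos _ (Nat.le_add_right _ _)
    rw [lt_div_iff₀ ha, one_mul]
    exact_mod_cast hs (Nat.lt_succ_self (n₁ + k))
  obtain ⟨k, hk⟩ := exists_nat_gt (((s (n₁ + 1) : ℝ) / s n₁ - 1) / (δ / 2))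
  have hkk : (s (n₁ + 1) : ℝ) / s n₁ - 1 < k * (δ / 2) := by
    rw [div_lt_iff₀ (by linarith : (0:ℝ) < δ / 2)] at hk
    linarith
  have := decr k
  have := ratio_gt k
  linarith
end

section
/- Let ρ₁, ρ₂ > 0 be real numbers with ρ₁² < 4·ρ₂. Then there is no strictly increasing sequence s₀, s₁, s₂, … of positive real numbers for which there exists n₁ such that s_{n+1} ≤ ρ₁·s_n − ρ₂·s_{n−1} holds for all n ≥ n₁. -/
/-- If `ρ₁, ρ₂ > 0` satisfy `ρ₁² < 4 ρ₂`, then there is no strictly increasing sequence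
of positive reals satisfying `s_{n+1} ≤ ρ₁ s_n − ρ₂ s_{n−1}` for all large `n`. -/
theorem no_constrained_growth (ρ₁ ρ₂ : ℝ) (hρ₁ : 0 < ρ₁) (hρ₂ : 0 < ρ₂)
    (h : ρ₁ ^ 2 < 4 * ρ₂) :
    ¬ ∃ s : ℕ → ℝ, (∀ n, 0 < s n) ∧ StrictMono s ∧
      ∃ n₁ : ℕ, ∀ n ≥ n₁, s (n + 1) ≤ ρ₁ * s n - ρ₂ * s (n - 1) := by
  rintro ⟨s, hpos, hmono, n₁, hrec⟩
  set c : ℝ := ρ₂ - ρ₁ ^ 2 / 4 with hc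
  have hc0 : 0 < c := by simp only [hc]; linarith
  set t : ℕ → ℝ := fun n => s (n + 1) / s n with ht
  have ht1 : ∀ n, 1 < t n := fun n => (one_lt_div (hpos n)).2 (hmono (Nat.lt_succ_self n))
  have ht0 : ∀ n, 0 < t n := fun n => lt_trans one_pos (ht1 n)
  have key : ∀ n ≥ n₁, t (n + 1) ≤ t n - c / t n := by
    intro n hn
    have h1 := hrec (n + 1) (Nat.le_succ_of_le hn)
    have e : n + 1 - 1 = n := rfl
    rw [e] at h1
    have hs0 := hpos n
    have hs1 := hpos (n + 1)
    have q : s (n + 1 + 1) * s n ≤ s (n + 1) ^ 2 - c * (s n) ^ 2 := by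
      rw [hc]
      nlinarith [mul_le_mul_of_nonneg_right h1 hs0.le,
        sq_nonneg (s (n + 1) - ρ₁ / 2 * s n)]
    show s (n + 1 + 1) / s (n + 1) ≤ s (n + 1) / s n - c / (s (n + 1) / s n)
    have h2 : c / (s (n + 1) / s n) = c * s n / s (n + 1) := by field_simp
    rw [h2, div_sub_div _ _ hs0.ne' hs1.ne', div_le_div_iff₀ hs1 (mul_pos hs0 hs1)]
    nlinarith [mul_le_mul_of_nonneg_right q hs1.le]
  set T : ℝ := t n₁ with hT
  have hT0 : 0 < T := ht0 n₁
  have hcT : 0 < c / T := div_pos hc0 hT0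
  have dec : ∀ k : ℕ, t (n₁ + k) ≤ T - k * (c / T) := by
    intro k
    induction k with
    | zero => simp [hT]
    | succ k ih =>
      have hle : t (n₁ + k) ≤ T := by
        have : 0 ≤ (k : ℝ) * (c / T) := by positivity
        linarith
      have hstep := key (n₁ + k) (Nat.le_add_right _ _)
      have hfrac : c / T ≤ c / t (n₁ + k) :=
        div_le_div_of_nonneg_left hc0.le (ht0 _) hle
      have : (n₁ + (k + 1)) = (n₁ + k) + 1 := by omega
      rw [this]
      push_cast
      linarith
  obtain ⟨k, hk⟩ := exists_nat_gt ((T - 1) / (c / T))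
  have hk' : T - 1 < k * (c / T) := by
    rwa [div_lt_iff₀ hcT] at hk
  have := dec k
  have := ht1 (n₁ + k)
  linarith
end

section
/- Let the edges of the complete graph K_ℕ on vertex set ℕ be 2-coloured with red and blue. Suppose ℕ \ S, for some finite set S ⊆ ℕ, is partitioned into pairwise disjoint sets X₁, X₂, X₃ such that X₁ and X₂ are infinite and every edge with endpoints in two distinct sets among X₁, X₂, X₃ is blue. Then there exists an infinite blue path whose vertex set is exactly X₁ ∪ X₂ ∪ X₃ = ℕ \ S. -/
/-- Alternating path between two disjoint infinite sets with all cross edges blue. -/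
lemma alt_blue_path (c : ℕ → ℕ → Bool) (hsymm : ∀ x y, c x y = c y x)
    (A B : Set ℕ) (hA : A.Infinite) (hB : B.Infinite) (hd : Disjoint A B)
    (hblue : ∀ x ∈ A, ∀ y ∈ B, c x y = false) :
    ∃ v : ℕ → ℕ, Function.Injective v ∧ (∀ i, c (v i) (v (i + 1)) = false) ∧
      Set.range v = A ∪ B := by
  have hA' : {x | x ∈ A}.Infinite := hA
  have hB' : {x | x ∈ B}.Infinite := hB
  set a : ℕ → ℕ := Nat.nth (· ∈ A) with ha
  set b : ℕ → ℕ := Nat.nth (· ∈ B) with hb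
  have haM : ∀ n, a n ∈ A := fun n => Nat.nth_mem_of_infinite hA' n
  have hbM : ∀ n, b n ∈ B := fun n => Nat.nth_mem_of_infinite hB' n
  refine ⟨fun n => if n % 2 = 0 then a (n / 2) else b (n / 2), ?_, ?_, ?_⟩
  · intro m n h
    simp only at h
    have hmem : ∀ k : ℕ, (if k % 2 = 0 then a (k / 2) else b (k / 2)) ∈ A ↔ k % 2 = 0 := by
      intro k
      by_cases hk : k % 2 = 0 <;> simp [hk]
      · exact haM _
      · exact fun hmem => (hd.ne_of_mem hmem (hbM (k / 2))) rfl
    have hpar : m % 2 = 0 ↔ n % 2 = 0 := by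
      rw [← hmem m, ← hmem n, h]
    by_cases hm : m % 2 = 0
    · have hn : n % 2 = 0 := hpar.mp hm
      rw [if_pos hm, if_pos hn] at h
      have := Nat.nth_injective hA' h
      omega
    · have hn : ¬ n % 2 = 0 := fun h' => hm (hpar.mpr h')
      rw [if_neg hm, if_neg hn] at h
      have := Nat.nth_injective hB' h
      omega
  · intro i
    by_cases hi : i % 2 = 0
    · have h1 : (i + 1) % 2 ≠ 0 := by omega
      simp only [if_pos hi, if_neg h1]
      exact hblue _ (haM _) _ (hbM _)
    · have h1 : (i + 1) % 2 = 0 := by omega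
      simp only [if_neg hi, if_pos h1]
      rw [hsymm]
      exact hblue _ (haM _) _ (hbM _)
  · ext x
    simp only [Set.mem_range, Set.mem_union]
    constructor
    · rintro ⟨n, rfl⟩
      by_cases hn : n % 2 = 0 <;> simp [hn]
      · exact Or.inl (haM _)
      · exact Or.inr (hbM _)
    · rintro (hx | hx)
      · obtain ⟨k, hk⟩ : x ∈ Set.range a := by
          rw [ha, Nat.range_nth_of_infinite hA']; exact hx
        exact ⟨2 * k, by simp [Nat.mul_div_cancel_left, hk]⟩
      · obtain ⟨k, hk⟩ : x ∈ Set.range b := by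
          rw [hb, Nat.range_nth_of_infinite hB']; exact hx
        refine ⟨2 * k + 1, ?_⟩
        have : (2 * k + 1) % 2 = 1 := by omega
        simp [this, hk, Nat.mul_add_div]

/-- Suppose the edges of `K_ℕ` are 2-coloured (red = `true`, blue = `false`), and
`ℕ \ S`, for a finite `S`, is partitioned into pairwise disjoint sets `X₁, X₂, X₃`
with `X₁, X₂` infinite, such that every edge between two distinct sets among
`X₁, X₂, X₃` is blue. Then there is an infinite blue path whose vertex set is exactly
`X₁ ∪ X₂ ∪ X₃ = ℕ \ S`. -/
theorem blue_path_spanning_complement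
    (c : ℕ → ℕ → Bool) (hsymm : ∀ x y, c x y = c y x)
    (S : Finset ℕ) (X₁ X₂ X₃ : Set ℕ)
    (hpart : X₁ ∪ X₂ ∪ X₃ = (↑S : Set ℕ)ᶜ)
    (h12 : Disjoint X₁ X₂) (h13 : Disjoint X₁ X₃) (h23 : Disjoint X₂ X₃)
    (h1 : X₁.Infinite) (h2 : X₂.Infinite)
    (hblue : ∀ x y : ℕ,
      ((x ∈ X₁ ∧ y ∈ X₂) ∨ (x ∈ X₁ ∧ y ∈ X₃) ∨ (x ∈ X₂ ∧ y ∈ X₃)) → c x y = false) :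
    ∃ v : ℕ → ℕ, Function.Injective v ∧ (∀ i, c (v i) (v (i + 1)) = false) ∧
      Set.range v = X₁ ∪ X₂ ∪ X₃ := by
  obtain ⟨v, hinj, hbl, hr⟩ := alt_blue_path c hsymm X₁ (X₂ ∪ X₃) h1
    (h2.mono Set.subset_union_left) (Set.disjoint_union_right.mpr ⟨h12, h13⟩)
    (by
      intro x hx y hy
      rcases hy with hy | hy
      · exact hblue x y (Or.inl ⟨hx, hy⟩)
      · exact hblue x y (Or.inr (Or.inl ⟨hx, hy⟩)))
  exact ⟨v, hinj, hbl, by rw [hr, Set.union_assoc]⟩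
end

section
/- Consider a 2-edge-colouring of K_ℕ. Suppose there exist two red vertices x₁, x₂ ∈ ℕ and a finite subset S of ℕ \ {x₁, x₂} such that K_ℕ \ S contains no red path between x₁ and x₂ (i.e. no finite path with all edges red, all vertices outside S, joining x₁ and x₂). Then there exists a monochromatic infinite path P whose vertex set has upper density equal to 1. -/
/-- The upper density of a set `A ⊆ ℕ`: `limsup_{n → ∞} |A ∩ {1, …, n}| / n`. -/
noncomputable def upperDensity (A : Set ℕ) : ℝ :=
  Filter.atTop.limsup fun n : ℕ => ((A ∩ Set.Icc 1 n).ncard : ℝ) / n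

/-- A vertex `x` is red if it has infinitely many red neighbours in `K_ℕ`
(red edges are those with `c x y = true`). -/
def IsRedVertex (c : ℕ → ℕ → Bool) (x : ℕ) : Prop :=
  {y : ℕ | y ≠ x ∧ c x y = true}.Infinite

/-- Reachability by a red (injective) path avoiding `S`. -/
def Reach (c : ℕ → ℕ → Bool) (S : Finset ℕ) (x y : ℕ) : Prop :=
  ∃ (n : ℕ) (v : ℕ → ℕ),
    v 0 = x ∧ v n = y ∧
    (∀ i ≤ n, v i ∉ S) ∧
    (∀ i ≤ n, ∀ j ≤ n, v i = v j → i = j) ∧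
    (∀ i < n, c (v i) (v (i + 1)) = true)

lemma reach_refl {c : ℕ → ℕ → Bool} {S : Finset ℕ} {x : ℕ} (hx : x ∉ S) :
    Reach c S x x :=
  ⟨0, fun _ => x, rfl, rfl, fun _ _ => hx, fun i hi j hj _ => by omega,
    fun i hi => by omega⟩

lemma reach_notMem {c : ℕ → ℕ → Bool} {S : Finset ℕ} {x y : ℕ}
    (h : Reach c S x y) : y ∉ S := by
  obtain ⟨n, v, h0, hn, hS, -, -⟩ := h
  exact hn ▸ hS n le_rfl

lemma reach_step {c : ℕ → ℕ → Bool} {S : Finset ℕ} {x y z : ℕ}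
    (h : Reach c S x y) (hz : z ∉ S) (hc : c y z = true) : Reach c S x z := by
  obtain ⟨n, v, h0, hn, hS, hinj, hred⟩ := h
  by_cases hmem : ∃ j ≤ n, v j = z
  · obtain ⟨j, hj, hvj⟩ := hmem
    exact ⟨j, v, h0, hvj, fun i hi => hS i (hi.trans hj),
      fun i hi k hk => hinj i (hi.trans hj) k (hk.trans hj),
      fun i hi => hred i (by omega)⟩
  · push_neg at hmem
    refine ⟨n + 1, fun i => if i ≤ n then v i else z, by simp [h0], by simp, ?_, ?_, ?_⟩
    · intro i hi
      by_cases h' : i ≤ n <;> simp [h'] <;> [exact hS i h'; exact hz]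
    · intro i hi j hj hij
      by_cases h1 : i ≤ n <;> by_cases h2 : j ≤ n <;> simp [h1, h2] at hij
      · exact hinj i h1 j h2 hij
      · exact absurd hij (hmem i h1)
      · exact absurd hij.symm (hmem j h2)
      · omega
    · intro i hi
      by_cases h' : i < n
      · simpa [show i ≤ n by omega, show i + 1 ≤ n by omega] using hred i h'
      · have hin : i = n := by omega
        subst hin
        simpa [hn] using hc

lemma reach_symm {c : ℕ → ℕ → Bool} (hsymm : ∀ a b, c a b = c b a)
    {S : Finset ℕ} {x y : ℕ} (h : Reach c S x y) : Reach c S y x := by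
  obtain ⟨n, v, h0, hn, hS, hinj, hred⟩ := h
  refine ⟨n, fun i => v (n - i), by simp [hn], by simp [h0], ?_, ?_, ?_⟩
  · intro i hi; exact hS _ (by omega)
  · intro i hi j hj hij
    have := hinj _ (by omega) _ (by omega) hij
    omega
  · intro i hi
    simp only []
    have hk : n - i = (n - (i + 1)) + 1 := by omega
    rw [hk, hsymm]
    exact hred _ (by omega)

lemma reach_trans {c : ℕ → ℕ → Bool} {S : Finset ℕ} {x y z : ℕ}
    (h1 : Reach c S x y) (h2 : Reach c S y z) : Reach c S x z := by
  obtain ⟨m, q, q0, qm, qS, qinj, qred⟩ := h2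
  have key : ∀ k, k ≤ m → Reach c S x (q k) := by
    intro k
    induction k with
    | zero => intro _; rw [q0]; exact h1
    | succ k ih =>
      intro hk
      exact reach_step (ih (by omega)) (qS _ hk) (qred k (by omega))
  have := key m le_rfl
  rwa [qm] at this

/-- Invariant for the growing blue path. -/
structure GoodList (c : ℕ → ℕ → Bool) (T : Set ℕ) (n : ℕ) (L : List ℕ) : Prop where
  ne : L ≠ []
  nodup : L.Nodup
  chain : L.Chain' (fun a b => c a b = false)
  subT : ∀ x ∈ L, x ∈ T
  cover : ∀ m < n, m ∈ T → m ∈ L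
  len : n < L.length

lemma fresh_pick (E : Set ℕ) (hE : E.Infinite) (F : Finset ℕ) :
    ∃ w ∈ E, w ∉ F := by
  obtain ⟨w, hw1, hw2⟩ := (hE.diff F.finite_toSet).nonempty
  exact ⟨w, hw1, by simpa using hw2⟩

lemma good_step (c : ℕ → ℕ → Bool) (hsymm : ∀ a b, c a b = c b a)
    (T : Set ℕ) (D : ℕ → Set ℕ)
    (hDinf : ∀ n, (D n).Infinite) (hDT : ∀ n, D n ⊆ T)
    (hP1 : ∀ n ∈ T, ∀ w ∈ D n, w ≠ n ∧ c n w = false)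
    (hP2 : ∀ m n, D m = D n ∨ ∀ a ∈ D m, ∀ b ∈ D n, a ≠ b ∧ c a b = false)
    (n : ℕ) (L : List ℕ) (hL : GoodList c T n L) :
    ∃ L', GoodList c T (n + 1) L' ∧ L <+: L' := by
  obtain ⟨hne, hnd, hch, hsub, hcov, hlen⟩ := hL
  set ℓ := L.getLast hne with hℓ
  have hℓT : ℓ ∈ T := hsub _ (List.getLast_mem hne)
  have hℓlast : L.getLast? = some ℓ := List.getLast?_eq_getLast hne
  by_cases hn : n ∈ T ∧ n ∉ L
  · obtain ⟨hnT, hnL⟩ := hn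
    rcases hP2 ℓ n with heq | hbr
    · -- one connector: L ++ [w, n]
      obtain ⟨w, hwD, hwF⟩ := fresh_pick (D ℓ) (hDinf ℓ) (insert n L.toFinset)
      simp only [Finset.mem_insert, List.mem_toFinset, not_or] at hwF
      obtain ⟨hwn, hwL⟩ := hwF
      refine ⟨L ++ [w, n], ⟨by simp, ?_, ?_, ?_, ?_, ?_⟩, List.prefix_append _ _⟩
      · rw [List.nodup_append]
        refine ⟨hnd, by simp [hwn], ?_⟩
        intro a haL
        simp only [List.mem_cons, List.mem_singleton, List.not_mem_nil, or_false]
        rintro _ (rfl | rfl) rfl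
        · exact hwL haL
        · exact hnL haL
      · unfold List.Chain'; rw [List.isChain_append]
        refine ⟨hch, ?_, ?_⟩
        · have h1 : c w n = false := by
            rw [hsymm]
            exact (hP1 n hnT w (heq ▸ hwD)).2
          simp [h1]
        · intro a ha b hb
          rw [hℓlast, Option.mem_some_iff] at ha
          simp only [List.head?_cons, Option.mem_some_iff] at hb
          subst ha; subst hb
          exact (hP1 ℓ hℓT w hwD).2
      · intro a ha
        rcases List.mem_append.1 ha with h | h
        · exact hsub a h
        · rcases List.mem_cons.1 h with rfl | h
          · exact hDT ℓ hwD
          · rcases List.mem_singleton.1 h with rfl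
            exact hnT
      · intro m hm hmT
        rcases Nat.lt_succ_iff_lt_or_eq.1 hm with h | rfl
        · exact List.mem_append_left _ (hcov m h hmT)
        · simp
      · simp only [List.length_append, List.length_cons, List.length_singleton]
        omega
    · -- two connectors: L ++ [w, w', n]
      obtain ⟨w, hwD, hwF⟩ := fresh_pick (D ℓ) (hDinf ℓ) (insert n L.toFinset)
      simp only [Finset.mem_insert, List.mem_toFinset, not_or] at hwF
      obtain ⟨hwn, hwL⟩ := hwF
      obtain ⟨w', hw'D, hw'F⟩ := fresh_pick (D n) (hDinf n) (insert w (insert n L.toFinset))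
      simp only [Finset.mem_insert, List.mem_toFinset, not_or] at hw'F
      obtain ⟨hw'w, hw'n, hw'L⟩ := hw'F
      refine ⟨L ++ [w, w', n], ⟨by simp, ?_, ?_, ?_, ?_, ?_⟩, List.prefix_append _ _⟩
      · rw [List.nodup_append]
        refine ⟨hnd, by simp [hwn, hw'n]; exact fun h => hw'w h.symm, ?_⟩
        intro a haL
        simp only [List.mem_cons, List.mem_singleton, List.not_mem_nil, or_false]
        rintro _ (rfl | rfl | rfl) rfl
        · exact hwL haL
        · exact hw'L haL
        · exact hnL haL
      · unfold List.Chain'; rw [List.isChain_append]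
        refine ⟨hch, ?_, ?_⟩
        · have h1 : c w w' = false := (hbr w hwD w' hw'D).2
          have h2 : c w' n = false := by
            rw [hsymm]; exact (hP1 n hnT w' hw'D).2
          simp [h1, h2]
        · intro a ha b hb
          rw [hℓlast, Option.mem_some_iff] at ha
          simp only [List.head?_cons, Option.mem_some_iff] at hb
          subst ha; subst hb
          exact (hP1 ℓ hℓT w hwD).2
      · intro a ha
        rcases List.mem_append.1 ha with h | h
        · exact hsub a h
        · rcases List.mem_cons.1 h with rfl | h
          · exact hDT ℓ hwD
          · rcases List.mem_cons.1 h with rfl | h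
            · exact hDT n hw'D
            · rcases List.mem_singleton.1 h with rfl
              exact hnT
      · intro m hm hmT
        rcases Nat.lt_succ_iff_lt_or_eq.1 hm with h | rfl
        · exact List.mem_append_left _ (hcov m h hmT)
        · simp
      · simp only [List.length_append, List.length_cons, List.length_singleton]
        omega
  · -- nothing to add: L ++ [w]
    obtain ⟨w, hwD, hwF⟩ := fresh_pick (D ℓ) (hDinf ℓ) L.toFinset
    rw [List.mem_toFinset] at hwF
    refine ⟨L ++ [w], ⟨by simp, ?_, ?_, ?_, ?_, ?_⟩, List.prefix_append _ _⟩
    · rw [List.nodup_append]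
      refine ⟨hnd, List.nodup_singleton w, ?_⟩
      intro a haL
      simp only [List.mem_singleton]
      rintro _ rfl rfl
      exact hwF haL
    · unfold List.Chain'; rw [List.isChain_append]
      refine ⟨hch, List.isChain_singleton w, ?_⟩
      intro a ha b hb
      rw [hℓlast, Option.mem_some_iff] at ha
      simp only [List.head?_cons, Option.mem_some_iff] at hb
      subst ha; subst hb
      exact (hP1 ℓ hℓT w hwD).2
    · intro a ha
      rcases List.mem_append.1 ha with h | h
      · exact hsub a h
      · rcases List.mem_singleton.1 h with rfl
        exact hDT ℓ hwD
    · intro m hm hmT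
      rcases Nat.lt_succ_iff_lt_or_eq.1 hm with h | rfl
      · exact List.mem_append_left _ (hcov m h hmT)
      · push_neg at hn
        exact List.mem_append_left _ (hn hmT)
    · simp only [List.length_append, List.length_singleton]
      omega
lemma exists_blue_path (c : ℕ → ℕ → Bool) (hsymm : ∀ a b, c a b = c b a)
    (T : Set ℕ) (D : ℕ → Set ℕ)
    (hDinf : ∀ n, (D n).Infinite) (hDT : ∀ n, D n ⊆ T)
    (hP1 : ∀ n ∈ T, ∀ w ∈ D n, w ≠ n ∧ c n w = false)
    (hP2 : ∀ m n, D m = D n ∨ ∀ a ∈ D m, ∀ b ∈ D n, a ≠ b ∧ c a b = false)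
    (x₀ : ℕ) (hx₀ : x₀ ∈ T) :
    ∃ v : ℕ → ℕ, Function.Injective v ∧ (∀ i, c (v i) (v (i + 1)) = false) ∧
      T ⊆ Set.range v := by
  have good0 : GoodList c T 0 [x₀] :=
    ⟨by simp, List.nodup_singleton _, List.isChain_singleton _,
      by simpa using hx₀, fun m hm => by omega, by simp⟩
  have hstep := good_step c hsymm T D hDinf hDT hP1 hP2
  let F : ∀ k, {L : List ℕ // GoodList c T k L} → {L : List ℕ // GoodList c T (k + 1) L} :=
    fun k p => ⟨(hstep k p.1 p.2).choose, (hstep k p.1 p.2).choose_spec.1⟩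
  let Ls : ∀ n : ℕ, {L : List ℕ // GoodList c T n L} :=
    fun n => Nat.rec ⟨[x₀], good0⟩ F n
  have hpre : ∀ n, (Ls n).1 <+: (Ls (n + 1)).1 :=
    fun n => (hstep n (Ls n).1 (Ls n).2).choose_spec.2
  have hmono : ∀ i j, i ≤ j → (Ls i).1 <+: (Ls j).1 := by
    intro i j hij
    induction j with
    | zero => rw [Nat.le_zero.1 hij]
    | succ j ih =>
      rcases Nat.le_succ_iff_eq_or_le.1 hij with rfl | h
      · exact List.prefix_refl _
      · exact (ih h).trans (hpre j)
  have hlen : ∀ n, n < (Ls n).1.length := fun n => (Ls n).2.len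
  let v : ℕ → ℕ := fun i => (Ls (i + 1)).1[i]'(by have := hlen (i + 1); omega)
  have hv : ∀ i j (h : i < (Ls j).1.length), (Ls j).1[i] = v i := by
    intro i j h
    rcases le_total j (i + 1) with hle | hle
    · exact (hmono j (i + 1) hle).getElem h
    · exact ((hmono (i + 1) j hle).getElem _).symm
  refine ⟨v, ?_, ?_, ?_⟩
  · intro i j hij
    set M := max i j + 1 with hM
    have hiM : i < (Ls M).1.length := by have := hlen M; omega
    have hjM : j < (Ls M).1.length := by have := hlen M; omega
    have h1 : (Ls M).1[i] = v i := hv i M hiM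
    have h2 : (Ls M).1[j] = v j := hv j M hjM
    exact ((Ls M).2.nodup.getElem_inj_iff).1 (by rw [h1, h2, hij])
  · intro i
    have hch := (Ls (i + 2)).2.chain
    have hl : i + 1 < (Ls (i + 2)).1.length - 1 + 1 := by have := hlen (i + 2); omega
    have := List.isChain_iff_getElem.1 hch i (by have := hlen (i + 2); omega)
    rwa [hv i (i + 2) (by have := hlen (i+2); omega),
      hv (i + 1) (i + 2) (by have := hlen (i+2); omega)] at this
  · intro t ht
    have h1 : t ∈ (Ls (t + 1)).1 := (Ls (t + 1)).2.cover t (by omega) ht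
    obtain ⟨k, hk, hkt⟩ := List.mem_iff_getElem.1 h1
    exact ⟨k, by rw [← hv k (t + 1) hk, hkt]⟩

open Filter in
lemma upperDensity_eq_one_of_cofinite (A : Set ℕ) (S : Finset ℕ)
    (hA : ∀ n : ℕ, n ∉ S → n ∈ A) : upperDensity A = 1 := by
  have key : Tendsto (fun n : ℕ => ((A ∩ Set.Icc 1 n).ncard : ℝ) / n) atTop (nhds 1) := by
    apply tendsto_of_tendsto_of_tendsto_of_le_of_le'
      (g := fun n : ℕ => ((n : ℝ) - S.card) / n) (h := fun _ => (1 : ℝ))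
    · have h0 : Tendsto (fun n : ℕ => 1 - (S.card : ℝ) / n) atTop (nhds 1) := by
        simpa using tendsto_const_nhds.sub (tendsto_const_div_atTop_nhds_zero_nat (S.card : ℝ))
      refine h0.congr' ?_
      filter_upwards [eventually_ge_atTop 1] with n hn
      have hn0 : (n : ℝ) ≠ 0 := by positivity
      rw [sub_div, div_self hn0]
    · exact tendsto_const_nhds
    · filter_upwards [eventually_ge_atTop 1] with n hn
      have hpos : (0 : ℝ) < n := by positivity
      have hfin : (Set.Icc 1 n).Finite := Set.finite_Icc _ _
      have hsub : (Set.Icc 1 n \ ↑S) ⊆ A ∩ Set.Icc 1 n := by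
        rintro x ⟨hx1, hx2⟩
        exact ⟨hA x (by simpa using hx2), hx1⟩
      have h1 : (Set.Icc 1 n \ ↑S).ncard ≤ (A ∩ Set.Icc 1 n).ncard :=
        Set.ncard_le_ncard hsub (hfin.inter_of_right _)
      have h2 : (Set.Icc 1 n).ncard ≤ (Set.Icc 1 n \ ↑S).ncard + (↑S : Set ℕ).ncard :=
        Set.ncard_le_ncard_diff_add_ncard _ _ S.finite_toSet
      have h3 : (Set.Icc 1 n).ncard = n := by
        rw [← Finset.coe_Icc, Set.ncard_coe_finset, Nat.card_Icc]; omega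
      have h4 : (↑S : Set ℕ).ncard = S.card := Set.ncard_coe_finset S
      have h5 : n ≤ (A ∩ Set.Icc 1 n).ncard + S.card := by omega
      have h6 : (n : ℝ) - S.card ≤ ((A ∩ Set.Icc 1 n).ncard : ℝ) := by
        have : (n : ℝ) ≤ ((A ∩ Set.Icc 1 n).ncard : ℝ) + S.card := by exact_mod_cast h5
        linarith
      gcongr
    · filter_upwards [eventually_ge_atTop 1] with n hn
      have hpos : (0 : ℝ) < n := by positivity
      rw [div_le_one hpos]
      have h1 : (A ∩ Set.Icc 1 n).ncard ≤ (Set.Icc 1 n).ncard :=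
        Set.ncard_le_ncard Set.inter_subset_right (Set.finite_Icc _ _)
      have h3 : (Set.Icc 1 n).ncard = n := by
        rw [← Finset.coe_Icc, Set.ncard_coe_finset, Nat.card_Icc]; omega
      exact_mod_cast h3 ▸ h1
  exact key.limsup_eq

/-- Suppose `K_ℕ` is 2-edge-coloured and there are two red vertices `x₁ ≠ x₂` and a
finite set `S ⊆ ℕ \ {x₁, x₂}` such that `K_ℕ \ S` contains no red path joining `x₁`
and `x₂`. Then there is a monochromatic infinite path whose vertex set has upper
density equal to `1`. -/
theorem non_joinable_red_vertices_give_dense_path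
    (c : ℕ → ℕ → Bool) (hsymm : ∀ x y, c x y = c y x)
    (x₁ x₂ : ℕ) (hx : x₁ ≠ x₂) (hx₁ : IsRedVertex c x₁) (hx₂ : IsRedVertex c x₂)
    (S : Finset ℕ) (hS₁ : x₁ ∉ S) (hS₂ : x₂ ∉ S)
    (hnopath : ¬ ∃ (n : ℕ) (v : ℕ → ℕ),
      v 0 = x₁ ∧ v n = x₂ ∧
      (∀ i ≤ n, v i ∉ S) ∧
      (∀ i ≤ n, ∀ j ≤ n, v i = v j → i = j) ∧
      (∀ i < n, c (v i) (v (i + 1)) = true)) :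
    ∃ (v : ℕ → ℕ) (b : Bool), Function.Injective v ∧
      (∀ i, c (v i) (v (i + 1)) = b) ∧
      upperDensity (Set.range v) = 1 := by
  classical
  have hR12 : ¬ Reach c S x₁ x₂ := hnopath
  set C₁ : Set ℕ := {u | Reach c S x₁ u} with hC₁def
  set C₂ : Set ℕ := {u | Reach c S x₂ u} with hC₂def
  set T : Set ℕ := {u : ℕ | u ∉ S} with hTdef
  -- basic facts
  have hdisj : ∀ u, u ∈ C₁ → u ∈ C₂ → False := fun u h1 h2 =>
    hR12 (reach_trans h1 (reach_symm hsymm h2))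
  have hC1T : C₁ ⊆ T := fun u hu => reach_notMem hu
  have hC2T : C₂ ⊆ T := fun u hu => reach_notMem hu
  have hC1inf : C₁.Infinite := by
    apply Set.Infinite.mono (s := {y : ℕ | y ≠ x₁ ∧ c x₁ y = true} \ ↑S)
    · rintro y ⟨⟨hy1, hy2⟩, hyS⟩
      exact reach_step (reach_refl hS₁) (by simpa using hyS) hy2
    · exact hx₁.diff S.finite_toSet
  have hC2inf : C₂.Infinite := by
    apply Set.Infinite.mono (s := {y : ℕ | y ≠ x₂ ∧ c x₂ y = true} \ ↑S)
    · rintro y ⟨⟨hy1, hy2⟩, hyS⟩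
      exact reach_step (reach_refl hS₂) (by simpa using hyS) hy2
    · exact hx₂.diff S.finite_toSet
  -- edge colour facts
  have h12 : ∀ a ∈ C₁, ∀ b ∈ C₂, a ≠ b ∧ c a b = false := by
    intro a ha b hb
    constructor
    · rintro rfl; exact hdisj a ha hb
    · by_contra h
      have h' : c a b = true := by
        cases hcb : c a b
        · exact absurd hcb h
        · rfl
      exact hdisj b (reach_step ha (hC2T hb) h') hb
  have hout1 : ∀ a, a ∈ T → a ∉ C₁ → ∀ b ∈ C₁, a ≠ b ∧ c a b = false := by
    intro a haT haC b hb
    constructor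
    · rintro rfl; exact haC hb
    · by_contra h
      have h' : c a b = true := by
        cases hcb : c a b
        · exact absurd hcb h
        · rfl
      have : c b a = true := by rw [hsymm] at h'; exact h'
      exact haC (reach_step hb haT this)
  have hout2 : ∀ a, a ∈ T → a ∉ C₂ → ∀ b ∈ C₂, a ≠ b ∧ c a b = false := by
    intro a haT haC b hb
    constructor
    · rintro rfl; exact haC hb
    · by_contra h
      have h' : c a b = true := by
        cases hcb : c a b
        · exact absurd hcb h
        · rfl
      have : c b a = true := by rw [hsymm] at h'; exact h'
      exact haC (reach_step hb haT this)
  -- the "blue side" assignment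
  set D : ℕ → Set ℕ := fun n => if n ∈ C₁ then C₂ else C₁ with hDdef
  have hDinf : ∀ n, (D n).Infinite := by
    intro n
    by_cases h : n ∈ C₁ <;> simp [hDdef, h, hC1inf, hC2inf]
  have hDT : ∀ n, D n ⊆ T := by
    intro n
    by_cases h : n ∈ C₁ <;> simp [hDdef, h, hC1T, hC2T]
  have hP1 : ∀ n ∈ T, ∀ w ∈ D n, w ≠ n ∧ c n w = false := by
    intro n hn w hw
    by_cases h : n ∈ C₁
    · rw [hDdef] at hw; simp only [h, if_true] at hw
      obtain ⟨h1, h2⟩ := h12 n h w hw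
      exact ⟨h1.symm, h2⟩
    · rw [hDdef] at hw; simp only [h, if_false] at hw
      obtain ⟨h1, h2⟩ := hout1 n hn h w hw
      exact ⟨h1.symm, h2⟩
  have hP2 : ∀ m n, D m = D n ∨ ∀ a ∈ D m, ∀ b ∈ D n, a ≠ b ∧ c a b = false := by
    intro m n
    by_cases hm : m ∈ C₁ <;> by_cases hn : n ∈ C₁
    · left; simp [hDdef, hm, hn]
    · right
      intro a ha b hb
      rw [hDdef] at ha hb; simp only [hm, hn, if_true, if_false] at ha hb
      have haT : a ∈ T := hC2T ha
      have haC : a ∉ C₁ := fun h => hdisj a h ha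
      exact hout1 a haT haC b hb
    · right
      intro a ha b hb
      rw [hDdef] at ha hb; simp only [hm, hn, if_true, if_false] at ha hb
      exact h12 a ha b hb
    · left; simp [hDdef, hm, hn]
  have hx₁T : x₁ ∈ T := hS₁
  obtain ⟨v, hinj, hedge, hTsub⟩ :=
    exists_blue_path c hsymm T D hDinf hDT hP1 hP2 x₁ hx₁T
  refine ⟨v, false, hinj, hedge, ?_⟩
  exact upperDensity_eq_one_of_cofinite _ S (fun n hn => hTsub hn)
end
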